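/- The sequence a(n) = \sum_{k=0}^{n} \binom{n}{k}^2 \binom{n+k}{k} satisfies the recursion n^2 a(n) - (11 n^2 - 11 n + 3) a(n-1) - (n-1)^2 a(n-2) = 0 for every integer n \ge 2. -/

import Mathlib

open Nat Finset

/-- The summand of the Apéry sum, as a rational number. -/
noncomputable def aperyF (n k : ℕ) : ℚ :=
  ((n.choose k : ℚ)) ^ 2 * (((n + k).choose k : ℚ))

/-- The Zeilberger certificate for Apéry's recursion (with `n = m + 2`). -/
noncomputable def aperyG (m k : ℕ) : ℚ :=
  if k ≤ m + 2 then
    ((m ! : ℚ) * ((m + k)! : ℚ)) / (((k ! : ℚ)) ^ 3 * (((m + 2 - k)! : ℚ)) ^ 2) *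
      ((k : ℚ) ^ 3 * ((m : ℚ) + 1) *
        ((k : ℚ) ^ 2 + (6 * (m : ℚ) + 7) * (k : ℚ) - ((m : ℚ) + 2) * (11 * (m : ℚ) + 15)))
  else 0

lemma fact_cast_ne (n : ℕ) : ((n ! : ℕ) : ℚ) ≠ 0 :=
  Nat.cast_ne_zero.2 (Nat.factorial_ne_zero n)

lemma apery_local (m k : ℕ) (hk : k ≤ m + 2) :
    ((m : ℚ) + 2) ^ 2 * aperyF (m + 2) k
      - (11 * ((m : ℚ) + 2) ^ 2 - 11 * ((m : ℚ) + 2) + 3) * aperyF (m + 1) k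
      - ((m : ℚ) + 1) ^ 2 * aperyF m k
    = aperyG m (k + 1) - aperyG m k := by
  rcases Nat.lt_or_ge k (m + 1) with h | h
  · -- case k ≤ m
    obtain ⟨j, rfl⟩ : ∃ j, m = k + j := ⟨m - k, by omega⟩
    simp only [aperyF, aperyG, if_pos (show k + 1 ≤ k + j + 2 by omega),
      if_pos (show k ≤ k + j + 2 by omega)]
    rw [Nat.cast_choose ℚ (show k ≤ k + j + 2 by omega),
        Nat.cast_choose ℚ (show k ≤ k + j + 2 + k by omega),
        Nat.cast_choose ℚ (show k ≤ k + j + 1 by omega),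
        Nat.cast_choose ℚ (show k ≤ k + j + 1 + k by omega),
        Nat.cast_choose ℚ (show k ≤ k + j by omega),
        Nat.cast_choose ℚ (show k ≤ k + j + k by omega)]
    rw [show k + j + 2 - k = j + 2 from by omega,
        show k + j + 2 + k - k = k + j + 2 from by omega,
        show k + j + 1 - k = j + 1 from by omega,
        show k + j + 1 + k - k = k + j + 1 from by omega,
        show k + j - k = j from by omega,
        show k + j + k - k = k + j from by omega,
        show k + j + 2 - (k + 1) = j + 1 from by omega,
        show k + j + (k + 1) = k + j + k + 1 from by omega,
        show k + j + 2 + k = k + j + k + 2 from by omega,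
        show k + j + 1 + k = k + j + k + 1 from by omega]
    simp only [Nat.factorial_succ]
    push_cast
    field_simp
    ring
  · rcases Nat.lt_or_ge k (m + 2) with h2 | h2
    · -- case k = m + 1
      obtain rfl : k = m + 1 := by omega
      simp only [aperyF, aperyG, if_pos (show m + 1 + 1 ≤ m + 2 by omega),
        if_pos (show m + 1 ≤ m + 2 by omega),
        Nat.choose_eq_zero_of_lt (show m < m + 1 by omega)]
      rw [Nat.cast_choose ℚ (show m + 1 ≤ m + 2 by omega),
          Nat.cast_choose ℚ (show m + 1 ≤ m + 2 + (m + 1) by omega),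
          Nat.cast_choose ℚ (show m + 1 ≤ m + 1 + (m + 1) by omega)]
      rw [show m + 2 - (m + 1) = 1 from by omega,
          show m + 2 + (m + 1) - (m + 1) = m + 2 from by omega,
          show m + 1 + (m + 1) - (m + 1) = m + 1 from by omega,
          show m + 2 - (m + 1 + 1) = 0 from by omega,
          show m + (m + 1 + 1) = m + m + 2 from by omega,
          show m + 2 + (m + 1) = m + m + 3 from by omega,
          show m + 1 + (m + 1) = m + m + 2 from by omega,
          show m + (m + 1) = m + m + 1 from by omega]
      simp only [Nat.factorial_succ, Nat.factorial_zero, Nat.factorial_one, Nat.choose_self]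
      push_cast
      field_simp
      ring
    · -- case k = m + 2
      obtain rfl : k = m + 2 := by omega
      simp only [aperyF, aperyG, if_pos (le_refl (m + 2)),
        if_neg (show ¬ (m + 2 + 1 ≤ m + 2) by omega),
        Nat.choose_eq_zero_of_lt (show m < m + 2 by omega),
        Nat.choose_eq_zero_of_lt (show m + 1 < m + 2 by omega)]
      rw [Nat.cast_choose ℚ (show m + 2 ≤ m + 2 + (m + 2) by omega)]
      rw [show m + 2 + (m + 2) - (m + 2) = m + 2 from by omega,
          show m + 2 - (m + 2) = 0 from by omega,
          show m + 2 + (m + 2) = m + m + 4 from by omega,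
          show m + (m + 2) = m + m + 2 from by omega]
      simp only [Nat.factorial_succ, Nat.factorial_zero, Nat.choose_self]
      push_cast
      field_simp
      ring

/-- The Apéry numbers `a n = ∑_{k=0}^n (n choose k)^2 ((n+k) choose k)` satisfy
Apéry's recursion `n² a(n) - (11n² - 11n + 3) a(n-1) - (n-1)² a(n-2) = 0`
for all `n ≥ 2`. -/
theorem apery_zeta2_recursion
    (a : ℕ → ℤ)
    (ha : ∀ n : ℕ, a n = ∑ k ∈ Finset.range (n + 1),
      ((n.choose k : ℤ)) ^ 2 * (((n + k).choose k : ℤ))) :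
    ∀ n : ℕ, 2 ≤ n →
      (n : ℤ) ^ 2 * a n
        - (11 * (n : ℤ) ^ 2 - 11 * (n : ℤ) + 3) * a (n - 1)
        - ((n : ℤ) - 1) ^ 2 * a (n - 2) = 0 := by
  intro n hn
  obtain ⟨m, rfl⟩ : ∃ m, n = m + 2 := ⟨n - 2, by omega⟩
  rw [show m + 2 - 1 = m + 1 from rfl, show m + 2 - 2 = m from rfl, ha, ha, ha]
  have e1 : ∑ k ∈ Finset.range (m + 3), aperyF (m + 1) k
      = ∑ k ∈ Finset.range (m + 1 + 1), aperyF (m + 1) k := by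
    rw [Finset.sum_range_succ (f := aperyF (m + 1)) (n := m + 2)]
    simp [aperyF, Nat.choose_eq_zero_of_lt (show m + 1 < m + 2 by omega)]
  have e2 : ∑ k ∈ Finset.range (m + 3), aperyF m k
      = ∑ k ∈ Finset.range (m + 1), aperyF m k := by
    rw [Finset.sum_range_succ (f := aperyF m) (n := m + 2),
        Finset.sum_range_succ (f := aperyF m) (n := m + 1)]
    simp [aperyF, Nat.choose_eq_zero_of_lt (show m < m + 2 by omega),
      Nat.choose_eq_zero_of_lt (show m < m + 1 by omega)]
  have hQ : ((m : ℚ) + 2) ^ 2 * (∑ k ∈ Finset.range (m + 2 + 1), aperyF (m + 2) k)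
      - (11 * ((m : ℚ) + 2) ^ 2 - 11 * ((m : ℚ) + 2) + 3) *
          (∑ k ∈ Finset.range (m + 1 + 1), aperyF (m + 1) k)
      - ((m : ℚ) + 1) ^ 2 * (∑ k ∈ Finset.range (m + 1), aperyF m k) = 0 := by
    rw [← e1, ← e2, show m + 2 + 1 = m + 3 from rfl]
    rw [Finset.mul_sum, Finset.mul_sum, Finset.mul_sum,
        ← Finset.sum_sub_distrib, ← Finset.sum_sub_distrib]
    rw [Finset.sum_congr rfl (fun k hk => apery_local m k
      (by have := Finset.mem_range.1 hk; omega))]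
    rw [Finset.sum_range_sub (aperyG m) (m + 3)]
    have h1 : aperyG m (m + 3) = 0 := by
      simp only [aperyG, if_neg (show ¬ (m + 3 ≤ m + 2) by omega)]
    have h2 : aperyG m 0 = 0 := by
      simp [aperyG]
    rw [h1, h2, sub_zero]
  simp only [aperyF] at hQ
  push_cast at hQ ⊢
  rw [show ((m : ℤ) + 2 - 1) = (m : ℤ) + 1 from by ring]
  exact_mod_cast hQ
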